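/- arXiv:math/0607406 — 3 statements merged into one kernel-verified Lean document; each statement's English description precedes it below -/
import Mathlib

section
/- Let (A(n))_{n∈ℤ} be a stationary ergodic sequence of random d×d max-plus matrices with strongly connected incidence graph, P(A_{ii}(0) = -∞) = 0 for every i, and max_{A_{ij}(0)≠-∞} A_{ij}^+(0) integrable. Then (1/n) y(n,0) → γ(A)·(1,…,1) almost surely, where y(n,0) = A(-1)⋯A(-n)·0 and γ(A) is the maximal Lyapunov exponent. -/
open Filter MeasureTheory Topology
noncomputable section

/-- The max-plus semiring ℝ ∪ {-∞}, modelled as `WithBot ℝ`: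
`⊥` is `-∞`, addition is the semiring multiplication, `Finset.sup` the semiring addition. -/
abbrev MP := WithBot ℝ

/-- Embedding of ℝ ∪ {-∞} into the extended reals. -/
def toE (x : MP) : EReal := WithBot.recBotCoe ⊥ (fun r : ℝ => (r : EReal)) x

instance : MeasurableSpace MP := MeasurableSpace.comap toE inferInstance

instance {d : ℕ} : MeasurableSpace (Matrix (Fin d) (Fin d) MP) :=
  inferInstanceAs (MeasurableSpace (Fin d → Fin d → MP))

/-- Max-plus matrix multiplication: `(AB)_{ij} = max_k (A_{ik} + B_{kj})`. -/
def mpMul {d : ℕ} (A B : Matrix (Fin d) (Fin d) MP) : Matrix (Fin d) (Fin d) MP :=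
  fun i j => Finset.univ.sup fun k => A i k + B k j

/-- Max-plus identity matrix. -/
def mpId (d : ℕ) : Matrix (Fin d) (Fin d) MP :=
  fun i j => if i = j then (0 : MP) else ⊥

/-- Max-plus action of a matrix on an MP vector: `(Ax)_i = max_j (A_{ij} + x_j)`. -/
def mpAct {d : ℕ} (A : Matrix (Fin d) (Fin d) MP) (x : Fin d → MP) : Fin d → MP :=
  fun i => Finset.univ.sup fun j => A i j + x j

/-- `A^n = A(n-1) ⋯ A(0)` (max-plus product). -/
def mpProdFwd {d : ℕ} (A : ℕ → Matrix (Fin d) (Fin d) MP) : ℕ → Matrix (Fin d) (Fin d) MP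
  | 0 => mpId d
  | n + 1 => mpMul (A n) (mpProdFwd A n)

/-- `A(-1) A(-2) ⋯ A(-n)`, for a two-sided sequence (max-plus product). -/
def mpProdNeg {d : ℕ} (A : ℤ → Matrix (Fin d) (Fin d) MP) : ℕ → Matrix (Fin d) (Fin d) MP
  | 0 => mpId d
  | n + 1 => mpMul (mpProdNeg A n) (A (-(n + 1 : ℕ)))

/-- A matrix has no line (row) entirely equal to -∞. -/
def noBotLine {d : ℕ} (A : Matrix (Fin d) (Fin d) MP) : Prop := ∀ i, ∃ j, A i j ≠ ⊥

/-- The positive part `x⁺ = max(x,0)` of an element of ℝ ∪ {-∞}, as a real number. -/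
def mpPlus (x : MP) : ℝ := max (WithBot.unbotD 0 x) 0

/-- `x_i(n,0) = max_j (A(n-1)⋯A(0))_{ij}`, i.e. `x(n,0) = A(n-1)⋯A(0)·0`. -/
def xvec {d : ℕ} (A : ℕ → Matrix (Fin d) (Fin d) MP) (n : ℕ) (i : Fin d) : MP :=
  Finset.univ.sup fun j => mpProdFwd A n i j

/-- `y_i(n,0) = max_j (A(-1)⋯A(-n))_{ij}`, i.e. `y(n,0) = A(-1)⋯A(-n)·0`. -/
def yvec {d : ℕ} (A : ℤ → Matrix (Fin d) (Fin d) MP) (n : ℕ) (i : Fin d) : MP :=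
  Finset.univ.sup fun j => mpProdNeg A n i j

/-- Bilateral iteration `θ^n` (n ∈ ℤ) of a map `θ` with inverse `θi`. -/
def zIter {Ω : Type*} (θ θi : Ω → Ω) (n : ℤ) (ω : Ω) : Ω :=
  if 0 ≤ n then θ^[n.toNat] ω else θi^[(-n).toNat] ω

/-- The submatrix supported on a subset `S` of indices, filled with -∞ elsewhere. -/
def mpRestrict {d : ℕ} (S : Finset (Fin d)) (A : Matrix (Fin d) (Fin d) MP) :
    Matrix (Fin d) (Fin d) MP :=
  fun i j => if i ∈ S ∧ j ∈ S then A i j else ⊥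

/-- Arc relation of the incidence graph `G(A)` of a random max-plus matrix. -/
def mpEdge {d : ℕ} {Ω : Type*} [MeasurableSpace Ω] (μ : Measure Ω)
    (A : Ω → Matrix (Fin d) (Fin d) MP) (a b : Fin d) : Prop :=
  0 < μ {ω | A ω a b ≠ ⊥}

-- algebraic helpers
lemma mp_sup_add {β : Type*} (s : Finset β) (f : β → MP) (c : MP) :
    s.sup f + c = s.sup fun b => f b + c := by
  induction s using Finset.cons_induction with
  | empty => simp
  | cons a s ha ih =>
    rw [Finset.sup_cons, Finset.sup_cons, ← ih]
    rcases le_total (f a) (s.sup f) with h | h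
    · rw [sup_eq_right.2 h, sup_eq_right.2 (add_le_add_left h c)]
    · rw [sup_eq_left.2 h, sup_eq_left.2 (add_le_add_left h c)]

lemma mp_add_sup {β : Type*} (s : Finset β) (f : β → MP) (c : MP) :
    c + s.sup f = s.sup fun b => c + f b := by
  induction s using Finset.cons_induction with
  | empty => simp
  | cons a s ha ih =>
    rw [Finset.sup_cons, Finset.sup_cons, ← ih]
    rcases le_total (f a) (s.sup f) with h | h
    · rw [sup_eq_right.2 h, sup_eq_right.2 (add_le_add_right h c)]
    · rw [sup_eq_left.2 h, sup_eq_left.2 (add_le_add_right h c)]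

lemma mpMul_le {d : ℕ} (A B : Matrix (Fin d) (Fin d) MP) (i k j : Fin d) :
    A i k + B k j ≤ mpMul A B i j :=
  Finset.le_sup (f := fun k => A i k + B k j) (Finset.mem_univ k)

lemma mpMul_id {d : ℕ} (A : Matrix (Fin d) (Fin d) MP) : mpMul A (mpId d) = A := by
  funext i j
  apply le_antisymm
  · apply Finset.sup_le
    intro k _
    by_cases h : k = j
    · subst h; simp [mpId]
    · simp [mpId, h]
  · have := mpMul_le A (mpId d) i j j
    simpa [mpId] using this

lemma mpMul_assoc {d : ℕ} (A B C : Matrix (Fin d) (Fin d) MP) :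
    mpMul (mpMul A B) C = mpMul A (mpMul B C) := by
  funext i j
  show Finset.univ.sup (fun k => mpMul A B i k + C k j)
      = Finset.univ.sup (fun l => A i l + mpMul B C l j)
  have h1 : ∀ k : Fin d, mpMul A B i k + C k j
      = Finset.univ.sup fun l => A i l + B l k + C k j := by
    intro k; exact mp_sup_add _ _ _
  have h2 : ∀ l : Fin d, A i l + mpMul B C l j
      = Finset.univ.sup fun k => A i l + (B l k + C k j) := by
    intro l; exact mp_add_sup _ _ _
  simp only [h1, h2]
  rw [Finset.sup_comm]
  congr 1; funext l; congr 1; funext k; rw [add_assoc]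

lemma mpProdNeg_split {d : ℕ} (A : ℤ → Matrix (Fin d) (Fin d) MP) (N m : ℕ) :
    mpProdNeg A (N + m) = mpMul (mpProdNeg A N) (mpProdNeg (fun k => A (k - N)) m) := by
  induction m with
  | zero => simp [mpProdNeg, mpMul_id]
  | succ m ih =>
    have hNm : N + (m + 1) = (N + m) + 1 := by ring
    have harg : (-(↑(N + m) + 1 : ℤ)) = ((-(m + 1 : ℕ) : ℤ) - N) := by push_cast; ring
    rw [hNm]
    show mpMul (mpProdNeg A (N + m)) (A (-(↑(N + m) + 1 : ℤ))) = _
    rw [ih, harg, mpMul_assoc]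
    rfl

lemma mp_ne_bot_of_le {x y : MP} (h : x ≤ y) (hx : x ≠ ⊥) : y ≠ ⊥ :=
  fun hy => hx (le_bot_iff.1 (hy ▸ h))

/-- nonbot propagation along diagonal -/
lemma prod_step_ne_bot {d : ℕ} (A : ℤ → Matrix (Fin d) (Fin d) MP) (n : ℕ) {i b c : Fin d}
    (h1 : mpProdNeg A n i b ≠ ⊥) (h2 : A (-(n + 1 : ℕ)) b c ≠ ⊥) :
    mpProdNeg A (n + 1) i c ≠ ⊥ := by
  have hle := mpMul_le (mpProdNeg A n) (A (-(n + 1 : ℕ))) i b c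
  refine mp_ne_bot_of_le hle ?_
  rw [Ne, WithBot.add_eq_bot]
  tauto

lemma prod_mono_ne_bot {d : ℕ} (A : ℤ → Matrix (Fin d) (Fin d) MP) {n : ℕ} {i b : Fin d}
    (hdiag : ∀ k : ℕ, A (-(k : ℤ)) b b ≠ ⊥)
    (h1 : mpProdNeg A n i b ≠ ⊥) : ∀ m, n ≤ m → mpProdNeg A m i b ≠ ⊥ := by
  intro m hm
  induction m with
  | zero => exact Nat.le_zero.1 hm ▸ h1
  | succ m ih =>
    rcases Nat.lt_or_ge n (m + 1) with h | h
    · have hm' : n ≤ m := by omega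
      have := ih hm'
      refine prod_step_ne_bot A m this ?_
      have := hdiag (m + 1)
      simpa using this
    · have : n = m + 1 := by omega
      exact this ▸ h1

/-- diagonal of products is nonbot -/
lemma prod_diag_ne_bot {d : ℕ} (A : ℤ → Matrix (Fin d) (Fin d) MP)
    (hdiag : ∀ (k : ℕ) (i : Fin d), A (-(k : ℤ)) i i ≠ ⊥) (i : Fin d) :
    ∀ n, mpProdNeg A n i i ≠ ⊥ := by
  intro n
  have h0 : mpProdNeg A 0 i i ≠ ⊥ := by simp [mpProdNeg, mpId]
  exact prod_mono_ne_bot A (fun k => hdiag k i) h0 n (Nat.zero_le n)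

/-- per-pair: from a path in an abstract edge relation that is realized at arbitrarily
large negative times, entries become nonbot at arbitrarily large times -/
lemma pair_freq_ne_bot {d : ℕ} (A : ℤ → Matrix (Fin d) (Fin d) MP)
    (E : Fin d → Fin d → Prop)
    (hdiag : ∀ (k : ℕ) (i : Fin d), A (-(k : ℤ)) i i ≠ ⊥)
    (hocc : ∀ a b, E a b → ∀ M : ℕ, ∃ n, M ≤ n ∧ A (-(n + 1 : ℕ)) a b ≠ ⊥)
    {i j : Fin d} (hpath : Relation.ReflTransGen E i j) :
    ∀ M : ℕ, ∃ n, M ≤ n ∧ mpProdNeg A n i j ≠ ⊥ := by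
  induction hpath with
  | refl => exact fun M => ⟨M, le_refl M, prod_diag_ne_bot A hdiag i M⟩
  | @tail b c hib hbc ih =>
    intro M
    obtain ⟨n, hn, hnb⟩ := ih M
    obtain ⟨k, hk, hkbc⟩ := hocc b c hbc n
    have hb : mpProdNeg A k i b ≠ ⊥ :=
      prod_mono_ne_bot A (fun m => hdiag m b) hnb k hk
    exact ⟨k + 1, by omega, prod_step_ne_bot A k hb hkbc⟩

/-- existence of N such that all entries of the product are nonbot from N on -/
lemma exists_all_ne_bot {d : ℕ} (A : ℤ → Matrix (Fin d) (Fin d) MP)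
    (E : Fin d → Fin d → Prop)
    (hdiag : ∀ (k : ℕ) (i : Fin d), A (-(k : ℤ)) i i ≠ ⊥)
    (hocc : ∀ a b, E a b → ∀ M : ℕ, ∃ n, M ≤ n ∧ A (-(n + 1 : ℕ)) a b ≠ ⊥)
    (hconn : ∀ i j : Fin d, Relation.ReflTransGen E i j) :
    ∃ N : ℕ, ∀ n, N ≤ n → ∀ i j, mpProdNeg A n i j ≠ ⊥ := by
  have h : ∀ p : Fin d × Fin d, ∃ n : ℕ, mpProdNeg A n p.1 p.2 ≠ ⊥ := by
    intro p
    obtain ⟨n, _, hn⟩ := pair_freq_ne_bot A E hdiag hocc (hconn p.1 p.2) 0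
    exact ⟨n, hn⟩
  choose nf hnf using h
  refine ⟨Finset.univ.sup nf, fun n hn i j => ?_⟩
  have : nf (i, j) ≤ n := le_trans (Finset.le_sup (Finset.mem_univ (i, j))) hn
  exact prod_mono_ne_bot A (fun m => hdiag m j) (hnf (i, j)) n this

lemma mp_coe_unbot' {x : MP} (h : x ≠ ⊥) : ((WithBot.unbotD 0 x : ℝ) : MP) = x := by
  obtain ⟨r, rfl⟩ := WithBot.ne_bot_iff_exists.1 h
  rfl

lemma toE_coe (r : ℝ) : toE ((r : ℝ) : MP) = (r : EReal) := rfl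

lemma ereal_tendsto_of_sub (u v : ℕ → ℝ) (γ : EReal)
    (h : Tendsto (fun n => ((v n : ℝ) : EReal)) atTop (𝓝 γ))
    (h0 : Tendsto (fun n => u n - v n) atTop (𝓝 (0 : ℝ))) :
    Tendsto (fun n => ((u n : ℝ) : EReal)) atTop (𝓝 γ) := by
  have heq : (fun n => ((u n : ℝ) : EReal))
      = fun n => ((v n : ℝ) : EReal) + (((u n - v n : ℝ)) : EReal) := by
    funext n; rw [← EReal.coe_add]; norm_num
  rw [heq]
  have h0' : Tendsto (fun n => (((u n - v n : ℝ)) : EReal)) atTop (𝓝 (0 : EReal)) := by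
    simpa using EReal.tendsto_coe.2 h0
  have hpair : Tendsto (fun n => (((v n : ℝ) : EReal), (((u n - v n : ℝ)) : EReal)))
      atTop (𝓝 (γ, (0 : EReal))) := h.prodMk_nhds h0'
  have hcont : ContinuousAt (fun p : EReal × EReal => p.1 + p.2) (γ, (0 : EReal)) :=
    EReal.continuousAt_add (by right; simp) (by right; simp)
  have := hcont.tendsto.comp hpair
  simpa only [Function.comp_def, add_zero] using this

lemma det_conv {d : ℕ} (hd : 0 < d) (A : ℤ → Matrix (Fin d) (Fin d) MP) (i : Fin d)
    (N : ℕ) (hN : ∀ n, N ≤ n → ∀ p q, mpProdNeg A n p q ≠ ⊥)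
    (γ : EReal)
    (hγ : Tendsto (fun n : ℕ => ((n : ℝ)⁻¹ : EReal) *
        toE (Finset.univ.sup fun pq : Fin d × Fin d => mpProdNeg A n pq.1 pq.2))
      atTop (𝓝 γ)) :
    Tendsto (fun n : ℕ => ((n : ℝ)⁻¹ : EReal) * toE (yvec A n i)) atTop (𝓝 γ) := by
  haveI : Nonempty (Fin d) := Fin.pos_iff_nonempty.1 hd
  haveI : Nonempty (Fin d × Fin d) := inferInstance
  set P : ℕ → Matrix (Fin d) (Fin d) MP := mpProdNeg A with hP
  set s : ℕ → MP := fun n => Finset.univ.sup fun pq : Fin d × Fin d => P n pq.1 pq.2 with hs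
  set pr : Fin d × Fin d → ℝ := fun pq => WithBot.unbotD 0 (P N pq.1 pq.2) with hpr
  have hcoe : ∀ p q : Fin d, P N p q = ((pr (p, q) : ℝ) : MP) :=
    fun p q => (mp_coe_unbot' (hN N le_rfl p q)).symm
  set pmin : ℝ := Finset.univ.inf' Finset.univ_nonempty pr with hpmin
  set pmax : ℝ := Finset.univ.sup' Finset.univ_nonempty pr with hpmax
  set K : ℝ := pmax - pmin with hK
  -- yvec ≤ s
  have hys : ∀ n, yvec A n i ≤ s n := by
    intro n
    refine Finset.sup_le fun j _ => ?_
    exact Finset.le_sup (f := fun pq : Fin d × Fin d => P n pq.1 pq.2) (Finset.mem_univ (i, j))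
  -- s n ≤ K + yvec n i for n ≥ N
  have hsy : ∀ n, N ≤ n → s n ≤ ((K : ℝ) : MP) + yvec A n i := by
    intro n hn
    obtain ⟨m, rfl⟩ : ∃ m, n = N + m := ⟨n - N, by omega⟩
    set R := mpProdNeg (fun k => A (k - N)) m with hR
    have hsplit : P (N + m) = mpMul (P N) R := mpProdNeg_split A N m
    set T : Fin d → MP := fun q => Finset.univ.sup fun k => R k q with hT
    have ha : ∀ p q : Fin d, P (N + m) p q ≤ ((pmax : ℝ) : MP) + T q := by
      intro p q
      rw [hsplit]
      show (Finset.univ.sup fun k => P N p k + R k q) ≤ _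
      rw [mp_add_sup]
      refine Finset.sup_mono_fun fun k _ => ?_
      refine add_le_add_left ?_ _
      rw [hcoe p k]
      exact WithBot.coe_le_coe.2 (Finset.le_sup' pr (Finset.mem_univ (p, k)))
    have hb : ∀ q : Fin d, ((pmin : ℝ) : MP) + T q ≤ yvec A (N + m) i := by
      intro q
      have h1 : ((pmin : ℝ) : MP) + T q ≤ P (N + m) i q := by
        rw [hsplit]
        show _ ≤ Finset.univ.sup fun k => P N i k + R k q
        rw [mp_add_sup]
        refine Finset.sup_mono_fun fun k _ => ?_
        refine add_le_add_left ?_ _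
        rw [hcoe i k]
        exact WithBot.coe_le_coe.2 (Finset.inf'_le pr (Finset.mem_univ (i, k)))
      exact h1.trans (Finset.le_sup (f := fun j => P (N + m) i j) (Finset.mem_univ q))
    refine Finset.sup_le fun pq _ => ?_
    have := ha pq.1 pq.2
    refine this.trans ?_
    have hrw : ((pmax : ℝ) : MP) = ((K : ℝ) : MP) + ((pmin : ℝ) : MP) := by
      rw [← WithBot.coe_add]; norm_num [hK]
    rw [hrw, add_assoc]
    exact add_le_add_right (hb pq.2) _
  -- nonbot of yvec and s for n ≥ N
  have hynb : ∀ n, N ≤ n → yvec A n i ≠ ⊥ := by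
    intro n hn
    exact mp_ne_bot_of_le (Finset.le_sup (f := fun j => P n i j) (Finset.mem_univ i))
      (hN n hn i i)
  have hsnb : ∀ n, N ≤ n → s n ≠ ⊥ := fun n hn => mp_ne_bot_of_le (hys n) (hynb n hn)
  set u : ℕ → ℝ := fun n => WithBot.unbotD 0 (yvec A n i) with hu
  set v : ℕ → ℝ := fun n => WithBot.unbotD 0 (s n) with hv
  have hucoe : ∀ n, N ≤ n → yvec A n i = ((u n : ℝ) : MP) :=
    fun n hn => (mp_coe_unbot' (hynb n hn)).symm
  have hvcoe : ∀ n, N ≤ n → s n = ((v n : ℝ) : MP) :=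
    fun n hn => (mp_coe_unbot' (hsnb n hn)).symm
  have huv : ∀ n, N ≤ n → u n ≤ v n ∧ v n ≤ K + u n := by
    intro n hn
    constructor
    · exact WithBot.coe_le_coe.1 (by rw [← hucoe n hn, ← hvcoe n hn]; exact hys n)
    · refine WithBot.coe_le_coe.1 ?_
      rw [WithBot.coe_add, ← hucoe n hn, ← hvcoe n hn]
      exact hsy n hn
  -- transfer the limit
  have hγ' : Tendsto (fun n : ℕ => (((n : ℝ)⁻¹ * v n : ℝ) : EReal)) atTop (𝓝 γ) := by
    refine hγ.congr' ?_
    filter_upwards [eventually_ge_atTop N] with n hn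
    have hv' : (Finset.univ.sup fun pq : Fin d × Fin d => P n pq.1 pq.2) = ((v n : ℝ) : MP) :=
      hvcoe n hn
    rw [hv', toE_coe, EReal.coe_mul]
    rfl
  have hdiff : Tendsto (fun n : ℕ => (n : ℝ)⁻¹ * u n - (n : ℝ)⁻¹ * v n) atTop (𝓝 (0 : ℝ)) := by
    refine squeeze_zero_norm' ?_ (tendsto_const_div_atTop_nhds_zero_nat K)
    filter_upwards [eventually_ge_atTop N, eventually_ge_atTop 1] with n hn hn1
    have h1 := (huv n hn).1
    have h2 := (huv n hn).2
    have hnpos : (0 : ℝ) < (n : ℝ) := by exact_mod_cast hn1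
    have : |(n : ℝ)⁻¹ * u n - (n : ℝ)⁻¹ * v n| = (n : ℝ)⁻¹ * |u n - v n| := by
      rw [← mul_sub, abs_mul, abs_of_pos (inv_pos.2 hnpos)]
    rw [Real.norm_eq_abs, this]
    have habs : |u n - v n| ≤ K := by
      rw [abs_sub_comm, abs_of_nonneg (by linarith)]
      linarith
    calc (n : ℝ)⁻¹ * |u n - v n| ≤ (n : ℝ)⁻¹ * K :=
          mul_le_mul_of_nonneg_left habs (inv_nonneg.2 hnpos.le)
      _ = K / (n : ℝ) := by rw [div_eq_mul_inv, mul_comm]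
  have hlim : Tendsto (fun n : ℕ => (((n : ℝ)⁻¹ * u n : ℝ) : EReal)) atTop (𝓝 γ) :=
    ereal_tendsto_of_sub _ _ γ hγ' hdiff
  refine hlim.congr' ?_
  filter_upwards [eventually_ge_atTop N] with n hn
  have hu' : (Finset.univ.sup fun j => P n i j) = ((u n : ℝ) : MP) := hucoe n hn
  show ((((n : ℝ)⁻¹ * u n : ℝ)) : EReal) = _ * toE (Finset.univ.sup fun j => P n i j)
  rw [hu', toE_coe, EReal.coe_mul]
  rfl

lemma zIter_neg {Ω : Type*} (θ θi : Ω → Ω) (k : ℕ) (ω : Ω) :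
    zIter θ θi (-(k : ℤ)) ω = θi^[k] ω := by
  cases k with
  | zero => simp [zIter]
  | succ k =>
    have h : ¬ (0 : ℤ) ≤ -((k + 1 : ℕ) : ℤ) := by push_cast; omega
    have h2 : ((- -((k + 1 : ℕ) : ℤ)).toNat) = k + 1 := by push_cast; omega
    simp only [zIter, h, if_false, h2]

lemma measurableSet_mp_bot : MeasurableSet {x : MP | x = ⊥} := by
  refine MeasurableSpace.measurableSet_comap.2 ⟨{⊥}, measurableSet_singleton ⊥, ?_⟩
  ext x
  cases x with
  | none => exact ⟨fun _ => rfl, fun _ => rfl⟩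
  | some r =>
    change toE (r : MP) = ⊥ ↔ (r : MP) = ⊥
    constructor
    · intro h; exact absurd h (EReal.coe_ne_bot r)
    · intro h; exact absurd h (by simp)

lemma ergodic_freq {Ω : Type*} [MeasurableSpace Ω] (μ : Measure Ω) [IsProbabilityMeasure μ]
    (g : Ω → Ω) (hg : Ergodic g μ) (S : Set Ω) (hSm : MeasurableSet S) (hpos : 0 < μ S) :
    ∀ᵐ ω ∂μ, ∀ M : ℕ, ∃ k, M ≤ k ∧ g^[k] ω ∈ S := by
  set V := ⋃ k : ℕ, (g^[k]) ⁻¹' S with hV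
  have hVm : MeasurableSet V :=
    MeasurableSet.iUnion fun k => (hg.measurable.iterate k) hSm
  have hsub : g ⁻¹' V ⊆ V := by
    rw [hV, Set.preimage_iUnion]
    refine Set.iUnion_subset fun k => ?_
    have heq : g ⁻¹' (g^[k] ⁻¹' S) = (g^[k + 1]) ⁻¹' S := by
      rw [← Set.preimage_comp, ← Function.iterate_succ g k]
    rw [heq]
    exact Set.subset_iUnion (fun k : ℕ => (g^[k]) ⁻¹' S) (k + 1)
  have hmeq : μ (g ⁻¹' V) = μ V := hg.measure_preimage hVm.nullMeasurableSet
  have hae : g ⁻¹' V =ᵐ[μ] V :=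
    ae_eq_of_subset_of_measure_ge hsub hmeq.ge (hVm.nullMeasurableSet.preimage
      hg.quasiMeasurePreserving) (measure_ne_top μ V)
  rcases hg.quasiErgodic.ae_empty_or_univ₀ hVm.nullMeasurableSet hae with h | h
  · exfalso
    have hS_sub : S ⊆ V := by
      have : S = (g^[0]) ⁻¹' S := by simp
      rw [this]; exact Set.subset_iUnion (fun k : ℕ => (g^[k]) ⁻¹' S) 0
    have : μ V = 0 := by
      have := measure_congr h; simpa using this
    exact absurd (measure_mono_null hS_sub this) (by exact hpos.ne')
  · have hVc : μ Vᶜ = 0 := ae_eq_univ.1 h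
    rw [ae_all_iff]
    intro M
    have hM : MeasurePreserving (g^[M]) μ μ := hg.toMeasurePreserving.iterate M
    have hnull : μ ((g^[M]) ⁻¹' Vᶜ) = 0 := by
      rw [hM.measure_preimage hVm.compl.nullMeasurableSet]; exact hVc
    have hmem : ∀ᵐ ω ∂μ, g^[M] ω ∈ V := by
      rw [ae_iff]
      convert hnull using 2
      rfl
    filter_upwards [hmem] with ω hω
    obtain ⟨k, hk⟩ : ∃ k : ℕ, g^[k] (g^[M] ω) ∈ S := by
      simpa [hV, Set.mem_iUnion] using hω
    exact ⟨k + M, by omega, by rwa [Function.iterate_add_apply]⟩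

/-- for a stationary ergodic sequence `A(n) = A ∘ θⁿ` (n ∈ ℤ) of random
max-plus matrices with strongly connected incidence graph, `P(A_{ii}(0) = -∞) = 0` for
every `i`, and `max_{A_{ij}(0) ≠ -∞} A⁺_{ij}(0)` integrable, one has
`(1/n)y(n,0) → γ(A)·(1,…,1)` a.s., where `γ(A)` is the maximal Lyapunov exponent. -/
theorem stmt15 {d : ℕ} {Ω : Type*} [MeasurableSpace Ω] (μ : Measure Ω)
    [IsProbabilityMeasure μ]
    (θ θi : Ω → Ω) (hθ : Ergodic θ μ) (hθi : MeasurePreserving θi μ μ)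
    (hli : Function.LeftInverse θi θ) (hri : Function.RightInverse θi θ)
    (A : Ω → Matrix (Fin d) (Fin d) MP) (hA : Measurable A)
    (hdiag : ∀ i, μ {ω | A ω i i = ⊥} = 0)
    (hconn : ∀ i j : Fin d, Relation.ReflTransGen (mpEdge μ A) i j)
    (hint : Integrable (fun ω => ⨆ ij : Fin d × Fin d, mpPlus (A ω ij.1 ij.2)) μ)
    (γ : EReal)
    -- γ is the maximal Lyapunov exponent
    (hγ : ∀ᵐ ω ∂μ, Tendsto (fun n : ℕ => ((n : ℝ)⁻¹ : EReal) *
        toE (Finset.univ.sup fun ij : Fin d × Fin d =>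
          mpProdNeg (fun k => A (zIter θ θi k ω)) n ij.1 ij.2)) atTop (𝓝 γ)) :
    ∀ᵐ ω ∂μ, ∀ i, Tendsto (fun n : ℕ => ((n : ℝ)⁻¹ : EReal) *
        toE (yvec (fun k => A (zIter θ θi k ω)) n i)) atTop (𝓝 γ) := by
  rcases Nat.eq_zero_or_pos d with hd | hd
  · subst hd
    filter_upwards with ω
    intro i
    exact i.elim0
  -- θi is ergodic
  have hθi_erg : Ergodic θi μ := by
    refine ⟨hθi, ⟨fun s hs hinv => ?_⟩⟩
    rw [Filter.eventuallyConst_set']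
    refine hθ.toPreErgodic.ae_empty_or_univ hs ?_
    have h1 : θ ⁻¹' s = θ ⁻¹' (θi ⁻¹' s) := by rw [hinv]
    have h2 : θi ∘ θ = id := funext hli
    rw [h1, ← Set.preimage_comp, h2, Set.preimage_id]
  -- measurability of entry-bot sets
  have hmeas : ∀ a b : Fin d, MeasurableSet {ω | A ω a b = ⊥} := by
    intro a b
    have hev : Measurable fun ω => A ω a b :=
      (measurable_pi_apply b).comp ((measurable_pi_apply a).comp hA)
    exact hev measurableSet_mp_bot
  -- diagonal never bot along negative orbit
  have hD : ∀ᵐ ω ∂μ, ∀ (k : ℕ) (i : Fin d), A (zIter θ θi (-(k : ℤ)) ω) i i ≠ ⊥ := by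
    rw [ae_all_iff]
    intro k
    rw [ae_all_iff]
    intro i
    have hk : MeasurePreserving (θi^[k]) μ μ := hθi.iterate k
    have hnull : μ ((θi^[k]) ⁻¹' {ω | A ω i i = ⊥}) = 0 := by
      rw [hk.measure_preimage (hmeas i i).nullMeasurableSet]; exact hdiag i
    rw [ae_iff]
    simp only [not_not]
    have hset : {ω | A (zIter θ θi (-(k : ℤ)) ω) i i = ⊥}
        = (θi^[k]) ⁻¹' {ω | A ω i i = ⊥} := by
      ext ω; simp [zIter_neg]
    rw [hset]
    exact hnull
  -- edges occur at arbitrarily large negative times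
  have hE : ∀ᵐ ω ∂μ, ∀ a b : Fin d, mpEdge μ A a b →
      ∀ M : ℕ, ∃ n, M ≤ n ∧ A (zIter θ θi (-(n + 1 : ℕ) : ℤ) ω) a b ≠ ⊥ := by
    rw [ae_all_iff]
    intro a
    rw [ae_all_iff]
    intro b
    by_cases he : mpEdge μ A a b
    · have hSm : MeasurableSet {ω | A ω a b ≠ ⊥} := by
        have : {ω | A ω a b ≠ ⊥} = {ω | A ω a b = ⊥}ᶜ := by ext ω; simp
        rw [this]; exact (hmeas a b).compl
      have hfreq := ergodic_freq μ θi hθi_erg _ hSm he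
      filter_upwards [hfreq] with ω hω
      intro _ M
      obtain ⟨k, hk, hkS⟩ := hω (M + 1)
      refine ⟨k - 1, by omega, ?_⟩
      have hk1 : k - 1 + 1 = k := by omega
      rw [hk1, zIter_neg]
      exact hkS
    · filter_upwards with ω
      exact fun hcon => absurd hcon he
  -- combine
  filter_upwards [hD, hE, hγ] with ω hDω hEω hγω
  intro i
  obtain ⟨N, hN⟩ := exists_all_ne_bot (fun k => A (zIter θ θi k ω)) (mpEdge μ A)
    hDω (fun a b hab M => hEω a b hab M) hconn
  exact det_conv hd (fun k => A (zIter θ θi k ω)) i N (fun n hn p q => hN n hn p q) γ hγω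
end
end

section
/- Consider the two-point probability space Ω = {ω_0, ω_1} with uniform measure and the swap map θ, and the random matrix A with A(ω_0) = [[-∞,0],[0,-∞]] and A(ω_1) = [[-∞,1],[0,-∞]]. For the sequence A(n) = A∘θ^n and x(n,z) = A(n-1)⋯A(0)·z (max-plus action), one has x(2n,z)(ω_0) = (z_1+n, z_2), x(2n+1,z)(ω_0) = (z_2, z_1+n), x(2n,z)(ω_1) = (z_1, z_2+n), x(2n+1,z)(ω_1) = (z_2+n+1, z_1). Consequently (1/n)x(n,0) does not converge almost surely. -/
open Filter MeasureTheory Topology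
noncomputable section

/-- The random matrix of Example 1: `A(ω₀) = [[-∞,0],[0,-∞]]`, `A(ω₁) = [[-∞,1],[0,-∞]]`,
on the two-point space `Ω = Bool` (`ω₀ = false`, `ω₁ = true`) with the swap map `not`. -/
def exAmat : Bool → Matrix (Fin 2) (Fin 2) MP
  | false => !![⊥, (0 : MP); (0 : MP), ⊥]
  | true => !![⊥, ((1 : ℝ) : MP); (0 : MP), ⊥]

/-- `x(n,z)(ω) = A(n-1)⋯A(0)·z` for the sequence `A(n) = exAmat ∘ notⁿ`. -/
def exX (ω : Bool) (z : Fin 2 → ℝ) (n : ℕ) : Fin 2 → MP :=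
  fun i => Finset.univ.sup fun j =>
    mpProdFwd (fun k => exAmat (Bool.not^[k] ω)) n i j + ((z j : ℝ) : MP)


lemma sup_fin2 (f : Fin 2 → MP) : Finset.univ.sup f = f 0 ⊔ f 1 := by
  rw [show (Finset.univ : Finset (Fin 2)) = {0, 1} by decide]; simp

lemma not_iter_even (k : ℕ) (ω : Bool) : Bool.not^[2*k] ω = ω := by
  induction k with
  | zero => rfl
  | succ k ih =>
    rw [show 2*(k+1) = (2*k)+1+1 by ring, Function.iterate_succ_apply',
      Function.iterate_succ_apply', ih, Bool.not_not]

lemma not_iter_odd (k : ℕ) (ω : Bool) : Bool.not^[2*k+1] ω = !ω := by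
  rw [Function.iterate_succ_apply', not_iter_even]

lemma prod_false (n : ℕ) :
    mpProdFwd (fun k => exAmat (Bool.not^[k] false)) (2*n) = !![((n:ℝ):MP),⊥;⊥,(0:MP)] ∧
    mpProdFwd (fun k => exAmat (Bool.not^[k] false)) (2*n+1) = !![⊥,(0:MP);((n:ℝ):MP),⊥] := by
  induction n with
  | zero =>
    constructor
    · funext i j; fin_cases i <;> fin_cases j <;>
        simp [mpProdFwd, mpId, Matrix.cons_val_zero, Matrix.cons_val_one]
    · show mpMul (exAmat (Bool.not^[0] false)) (mpProdFwd _ 0) = _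
      funext i j; fin_cases i <;> fin_cases j <;>
        simp [mpMul, mpProdFwd, mpId, exAmat, sup_fin2, Matrix.cons_val_zero,
          Matrix.cons_val_one, Matrix.head_cons]
  | succ n ih =>
    have h2 : mpProdFwd (fun k => exAmat (Bool.not^[k] false)) (2*(n+1)) =
        !![(((n:ℝ)+1):MP),⊥;⊥,(0:MP)] := by
      rw [show 2*(n+1) = (2*n+1)+1 by ring]
      show mpMul (exAmat (Bool.not^[2*n+1] false)) _ = _
      rw [not_iter_odd, ih.2]
      funext i j; fin_cases i <;> fin_cases j <;>
        simp [mpMul, exAmat, sup_fin2, Matrix.cons_val_zero, Matrix.cons_val_one,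
          Matrix.head_cons, ← WithBot.coe_add] <;> norm_cast <;> ring
    refine ⟨by rw [h2]; norm_num, ?_⟩
    show mpMul (exAmat (Bool.not^[2*(n+1)] false)) _ = _
    rw [not_iter_even, h2]
    funext i j; fin_cases i <;> fin_cases j <;>
      simp [mpMul, exAmat, sup_fin2, Matrix.cons_val_zero, Matrix.cons_val_one,
        Matrix.head_cons, ← WithBot.coe_add] <;> norm_cast <;> ring

lemma prod_true (n : ℕ) :
    mpProdFwd (fun k => exAmat (Bool.not^[k] true)) (2*n) = !![(0:MP),⊥;⊥,((n:ℝ):MP)] ∧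
    mpProdFwd (fun k => exAmat (Bool.not^[k] true)) (2*n+1) = !![⊥,(((n:ℝ)+1):MP);(0:MP),⊥] := by
  induction n with
  | zero =>
    constructor
    · funext i j; fin_cases i <;> fin_cases j <;>
        simp [mpProdFwd, mpId, Matrix.cons_val_zero, Matrix.cons_val_one]
    · show mpMul (exAmat (Bool.not^[0] true)) (mpProdFwd _ 0) = _
      funext i j; fin_cases i <;> fin_cases j <;>
        simp [mpMul, mpProdFwd, mpId, exAmat, sup_fin2, Matrix.cons_val_zero,
          Matrix.cons_val_one, Matrix.head_cons] <;> norm_cast <;> ring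
  | succ n ih =>
    have h2 : mpProdFwd (fun k => exAmat (Bool.not^[k] true)) (2*(n+1)) =
        !![(0:MP),⊥;⊥,(((n:ℝ)+1):MP)] := by
      rw [show 2*(n+1) = (2*n+1)+1 by ring]
      show mpMul (exAmat (Bool.not^[2*n+1] true)) _ = _
      rw [not_iter_odd, ih.2]
      funext i j; fin_cases i <;> fin_cases j <;>
        simp [mpMul, exAmat, sup_fin2, Matrix.cons_val_zero, Matrix.cons_val_one,
          Matrix.head_cons, ← WithBot.coe_add] <;> norm_cast <;> ring
    refine ⟨by rw [h2]; norm_num, ?_⟩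
    show mpMul (exAmat (Bool.not^[2*(n+1)] true)) _ = _
    rw [not_iter_even, h2]
    funext i j; fin_cases i <;> fin_cases j <;>
      simp [mpMul, exAmat, sup_fin2, Matrix.cons_val_zero, Matrix.cons_val_one,
        Matrix.head_cons, ← WithBot.coe_add] <;> norm_cast <;> ring

lemma exX_eval (z : Fin 2 → ℝ) (n : ℕ) :
    exX false z (2 * n) = ![((z 0 + n : ℝ) : MP), ((z 1 : ℝ) : MP)] ∧
    exX false z (2 * n + 1) = ![((z 1 : ℝ) : MP), ((z 0 + n : ℝ) : MP)] ∧
    exX true z (2 * n) = ![((z 0 : ℝ) : MP), ((z 1 + n : ℝ) : MP)] ∧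
    exX true z (2 * n + 1) = ![((z 1 + n + 1 : ℝ) : MP), ((z 0 : ℝ) : MP)] := by
  refine ⟨?_, ?_, ?_, ?_⟩ <;>
  · funext i
    first
      | rw [show exX false z (2*n) i = Finset.univ.sup fun j =>
            mpProdFwd (fun k => exAmat (Bool.not^[k] false)) (2*n) i j + ((z j : ℝ) : MP) from rfl,
          (prod_false n).1]
      | rw [show exX false z (2*n+1) i = Finset.univ.sup fun j =>
            mpProdFwd (fun k => exAmat (Bool.not^[k] false)) (2*n+1) i j + ((z j : ℝ) : MP) from rfl,
          (prod_false n).2]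
      | rw [show exX true z (2*n) i = Finset.univ.sup fun j =>
            mpProdFwd (fun k => exAmat (Bool.not^[k] true)) (2*n) i j + ((z j : ℝ) : MP) from rfl,
          (prod_true n).1]
      | rw [show exX true z (2*n+1) i = Finset.univ.sup fun j =>
            mpProdFwd (fun k => exAmat (Bool.not^[k] true)) (2*n+1) i j + ((z j : ℝ) : MP) from rfl,
          (prod_true n).2]
    fin_cases i <;>
      simp [sup_fin2, Matrix.cons_val_zero, Matrix.cons_val_one, Matrix.head_cons,
        ← WithBot.coe_add] <;> norm_cast <;> push_cast <;> ring

lemma tendsto_two_mul : Tendsto (fun m : ℕ => 2 * m) atTop atTop :=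
  Filter.tendsto_atTop_atTop_of_monotone (fun a b h => by omega) (fun b => ⟨b, by omega⟩)

lemma tendsto_two_mul_add_one : Tendsto (fun m : ℕ => 2 * m + 1) atTop atTop :=
  Filter.tendsto_atTop_atTop_of_monotone (fun a b h => by omega) (fun b => ⟨b, by omega⟩)

lemma no_limit (f : ℕ → ℝ) (he : ∀ m, f (2*m) = ((2*m : ℕ) : ℝ)⁻¹ * m)
    (ho : ∀ m, f (2*m+1) = 0) (L : ℝ) : ¬ Tendsto f atTop (𝓝 L) := by
  intro h
  have h1 : Tendsto (fun m => f (2*m)) atTop (𝓝 L) := h.comp tendsto_two_mul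
  have h2 : Tendsto (fun m => f (2*m+1)) atTop (𝓝 L) := h.comp tendsto_two_mul_add_one
  have e1 : Tendsto (fun m => f (2*m)) atTop (𝓝 (1/2)) := by
    refine Tendsto.congr' ?_ (tendsto_const_nhds (x := (1/2 : ℝ)))
    filter_upwards [eventually_ge_atTop 1] with m hm
    rw [he m]
    have hm' : (m : ℝ) ≠ 0 := by positivity
    push_cast
    field_simp
  have e2 : Tendsto (fun m => f (2*m+1)) atTop (𝓝 0) := by
    refine Tendsto.congr' ?_ (tendsto_const_nhds (x := (0 : ℝ)))
    filter_upwards [eventually_ge_atTop 0] with m _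
    rw [ho m]
  have := tendsto_nhds_unique h1 e1
  have := tendsto_nhds_unique h2 e2
  norm_num at *
  linarith

/-- explicit computation of `x(n,z)` for Example 1
(the two-point swap system), and the consequent a.s. non-convergence of `(1/n)x(n,0)`
(the measure being uniform on the two points, a.s. non-convergence means
non-convergence at both points). -/
theorem stmt16 :
    (∀ (z : Fin 2 → ℝ) (n : ℕ),
      exX false z (2 * n) = ![((z 0 + n : ℝ) : MP), ((z 1 : ℝ) : MP)] ∧
      exX false z (2 * n + 1) = ![((z 1 : ℝ) : MP), ((z 0 + n : ℝ) : MP)] ∧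
      exX true z (2 * n) = ![((z 0 : ℝ) : MP), ((z 1 + n : ℝ) : MP)] ∧
      exX true z (2 * n + 1) = ![((z 1 + n + 1 : ℝ) : MP), ((z 0 : ℝ) : MP)]) ∧
    (∀ ω : Bool, ¬ ∃ L : Fin 2 → ℝ, ∀ i, Tendsto
      (fun n : ℕ => (n : ℝ)⁻¹ * (WithBot.unbotD 0 (exX ω (fun _ => 0) n i))) atTop (𝓝 (L i))) := by
  refine ⟨fun z n => exX_eval z n, ?_⟩
  rintro ω ⟨L, hL⟩
  cases ω
  · exact no_limit _ (fun m => by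
        rw [show (2*m : ℕ) = 2*m from rfl, ((exX_eval (fun _ => 0) m).1 :),
          Matrix.cons_val_zero]
        norm_num)
      (fun m => by
        rw [((exX_eval (fun _ => 0) m).2.1 :), Matrix.cons_val_zero]
        norm_num) (L 0) (hL 0)
  · exact no_limit _ (fun m => by
        rw [((exX_eval (fun _ => 0) m).2.2.1 :), Matrix.cons_val_one, Matrix.cons_val_zero]
        norm_num)
      (fun m => by
        rw [((exX_eval (fun _ => 0) m).2.2.2 :), Matrix.cons_val_one, Matrix.cons_val_zero]
        norm_num) (L 1) (hL 1)
end
end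

section
/- Let (A(n))_{n∈ℕ} be i.i.d. random 3×3 max-plus matrices taking value B = [[0,-∞,-∞],[0,-∞,-∞],[0,1,1]] with probability p ∈ (0,1) and C = [[0,-∞,-∞],[0,-∞,0],[0,0,-∞]] with probability 1-p. Then for x(n,0) = A(n-1)⋯A(0)·0 (max-plus action), almost surely (1/n)x_1(n,0) → 0, while for i ∈ {2,3}, liminf (1/n)x_i(n,0) = 0 and limsup (1/n)x_i(n,0) = p. In particular (1/n)x(n,0) does not converge almost surely. -/
open Filter MeasureTheory Topology
noncomputable section

/-- The matrix `B` of Example 2. -/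
def exBmat : Matrix (Fin 3) (Fin 3) MP :=
  !![(0 : MP), ⊥, ⊥; (0 : MP), ⊥, ⊥; (0 : MP), ((1 : ℝ) : MP), ((1 : ℝ) : MP)]

/-- The matrix `C` of Example 2. -/
def exCmat : Matrix (Fin 3) (Fin 3) MP :=
  !![(0 : MP), ⊥, ⊥; (0 : MP), ⊥, (0 : MP); (0 : MP), (0 : MP), ⊥]

section Det
variable (a : ℕ → Matrix (Fin 3) (Fin 3) MP)

lemma sup3 (f : Fin 3 → MP) : Finset.univ.sup f = f 0 ⊔ f 1 ⊔ f 2 := by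
  show Finset.sup {0,1,2} f = _
  simp [Finset.sup_insert, sup_assoc]

lemma add_sup' (c x y : MP) : c + (x ⊔ y) = (c + x) ⊔ (c + y) := by
  rcases le_total x y with h | h
  · rw [sup_eq_right.2 h, sup_eq_right.2 (show c + x ≤ c + y from add_le_add (le_refl c) h)]
  · rw [sup_eq_left.2 h, sup_eq_left.2 (show c + y ≤ c + x from add_le_add (le_refl c) h)]

lemma xvec_succ (n : ℕ) (i : Fin 3) :
    xvec a (n + 1) i = Finset.univ.sup fun k => a n i k + xvec a n k := by
  unfold xvec
  show Finset.univ.sup (fun j => mpMul (a n) (mpProdFwd a n) i j) = _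
  unfold mpMul
  rw [Finset.sup_comm]
  refine Finset.sup_congr rfl fun k _ => ?_
  rw [sup3, sup3 (fun j => mpProdFwd a n k j), add_sup', add_sup']

lemma exB00 : exBmat 0 0 = 0 := rfl
lemma exB01 : exBmat 0 1 = ⊥ := rfl
lemma exB02 : exBmat 0 2 = ⊥ := rfl
lemma exB10 : exBmat 1 0 = 0 := rfl
lemma exB11 : exBmat 1 1 = ⊥ := rfl
lemma exB12 : exBmat 1 2 = ⊥ := rfl
lemma exB20 : exBmat 2 0 = 0 := rfl
lemma exB21 : exBmat 2 1 = ((1:ℝ):MP) := rfl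
lemma exB22 : exBmat 2 2 = ((1:ℝ):MP) := rfl
lemma exC00 : exCmat 0 0 = 0 := rfl
lemma exC01 : exCmat 0 1 = ⊥ := rfl
lemma exC02 : exCmat 0 2 = ⊥ := rfl
lemma exC10 : exCmat 1 0 = 0 := rfl
lemma exC11 : exCmat 1 1 = ⊥ := rfl
lemma exC12 : exCmat 1 2 = 0 := rfl
lemma exC20 : exCmat 2 0 = 0 := rfl
lemma exC21 : exCmat 2 1 = 0 := rfl
lemma exC22 : exCmat 2 2 = ⊥ := rfl

lemma exB_ne_exC : exBmat ≠ exCmat := by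
  intro hh
  have h1 : (⊥ : MP) = 0 := by rw [← exB12, hh, exC12]
  exact absurd h1 (by simp)

/-- number of B's among a 0, ..., a (n-1) -/
def nB (n : ℕ) : ℕ := ((Finset.range n).filter fun k => a k = exBmat).card

/-- "left" state: x(n) = (0, 0, S n) -/
def Lst (n : ℕ) : Prop :=
  xvec a n 0 = 0 ∧ xvec a n 1 = 0 ∧ xvec a n 2 = ((nB a n : ℝ) : MP)

/-- "right" state: x(n) = (0, S n, 0) -/
def Rst (n : ℕ) : Prop :=
  xvec a n 0 = 0 ∧ xvec a n 1 = ((nB a n : ℝ) : MP) ∧ xvec a n 2 = 0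

lemma nB_succ_B {n : ℕ} (h : a n = exBmat) : nB a (n + 1) = nB a n + 1 := by
  unfold nB
  rw [Finset.range_add_one, Finset.filter_insert, if_pos h,
    Finset.card_insert_of_notMem (by simp)]

lemma nB_succ_C {n : ℕ} (h : a n = exCmat) : nB a (n + 1) = nB a n := by
  unfold nB
  rw [Finset.range_add_one, Finset.filter_insert,
    if_neg (by rw [h]; exact fun hh => exB_ne_exC hh.symm)]

lemma nB_nonneg_coe (n : ℕ) : (0 : MP) ≤ ((nB a n : ℝ) : MP) :=
  WithBot.coe_le_coe.2 (by positivity)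

lemma Lst_zero : Lst a 0 := by
  refine ⟨?_, ?_, ?_⟩ <;>
  · show Finset.univ.sup (fun j => mpId 3 _ j) = _
    rw [sup3]
    simp [mpId, nB]

lemma stepB {n : ℕ} (h : a n = exBmat) (hLR : Lst a n ∨ Rst a n) : Lst a (n + 1) := by
  have h0 : xvec a n 0 = 0 := by rcases hLR with ⟨h1, _⟩ | ⟨h1, _⟩ <;> exact h1
  have hmax : xvec a n 1 ⊔ xvec a n 2 = ((nB a n : ℝ) : MP) := by
    rcases hLR with ⟨_, h1, h2⟩ | ⟨_, h1, h2⟩ <;> rw [h1, h2]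
    · exact sup_eq_right.2 (nB_nonneg_coe a n)
    · exact sup_eq_left.2 (nB_nonneg_coe a n)
  refine ⟨?_, ?_, ?_⟩ <;> rw [xvec_succ, sup3, h]
  · simp [exB00, exB01, exB02, h0]
  · simp [exB10, exB11, exB12, h0]
  · rw [exB20, exB21, exB22, h0, add_zero, sup_assoc, ← add_sup', hmax, nB_succ_B a h,
      ← WithBot.coe_add]
    rw [sup_eq_right.2 (le_trans (nB_nonneg_coe a n) (WithBot.coe_le_coe.2 (by linarith)))]
    push_cast
    rw [add_comm]

lemma stepC {n : ℕ} (h : a n = exCmat) :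
    (Lst a n → Rst a (n+1)) ∧ (Rst a n → Lst a (n+1)) := by
  constructor <;> rintro ⟨h0, h1, h2⟩ <;>
    refine ⟨?_, ?_, ?_⟩ <;> rw [xvec_succ, sup3, h] <;> (try rw [nB_succ_C a h]) <;>
    simp [exC00, exC01, exC02, exC10, exC11, exC12, exC20, exC21, exC22, h0, h1, h2] <;>
    exact sup_eq_right.2 (nB_nonneg_coe a n)

lemma inv (hv : ∀ k, a k = exBmat ∨ a k = exCmat) : ∀ n, Lst a n ∨ Rst a n := by
  intro n
  induction n with
  | zero => exact Or.inl (Lst_zero a)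
  | succ n ih =>
    rcases hv n with h | h
    · exact Or.inl (stepB a h ih)
    · rcases ih with hL | hR
      · exact Or.inr ((stepC a h).1 hL)
      · exact Or.inl ((stepC a h).2 hR)
end Det

section Limits
variable (a : ℕ → Matrix (Fin 3) (Fin 3) MP)

/-- abstract limit lemma for one coordinate -/
lemma coordLimits (p : ℝ) (hp0 : 0 < p) (r : ℕ → ℝ)
    (hS : Tendsto (fun n : ℕ => (nB a n : ℝ) / n) atTop (𝓝 p))
    (hb : ∀ n, r n = 0 ∨ r n = (nB a n : ℝ))
    (h0io : ∀ N, ∃ n ≥ N, r n = 0)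
    (hpio : ∀ N, ∃ n ≥ N, r n = (nB a n : ℝ)) :
    liminf (fun n : ℕ => (n : ℝ)⁻¹ * r n) atTop = 0 ∧
      limsup (fun n : ℕ => (n : ℝ)⁻¹ * r n) atTop = p := by
  set f : ℕ → ℝ := fun n => (n : ℝ)⁻¹ * r n with hf
  set g : ℕ → ℝ := fun n => (nB a n : ℝ) / n with hg
  have hr0 : ∀ n, 0 ≤ r n := by
    intro n; rcases hb n with h | h <;> rw [h] <;> positivity
  have hf0 : ∀ n, 0 ≤ f n := fun n => by
    have : (0:ℝ) ≤ (n:ℝ)⁻¹ := by positivity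
    exact mul_nonneg this (hr0 n)
  have hfg : ∀ n, f n ≤ g n := by
    intro n
    have : f n ≤ (n:ℝ)⁻¹ * (nB a n : ℝ) := by
      refine mul_le_mul_of_nonneg_left ?_ (by positivity)
      rcases hb n with h | h
      · rw [h]; positivity
      · rw [h]
    calc f n ≤ (n:ℝ)⁻¹ * (nB a n : ℝ) := this
      _ = g n := inv_mul_eq_div _ _
  have hbdd_le : IsBoundedUnder (· ≤ ·) atTop f :=
    (hS.isBoundedUnder_le).mono_le (Eventually.of_forall hfg)
  have hbdd_ge : IsBoundedUnder (· ≥ ·) atTop f :=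
    isBoundedUnder_of ⟨0, fun n => hf0 n⟩
  constructor
  · refine le_antisymm ?_ ?_
    · refine liminf_le_of_frequently_le ?_ hbdd_ge
      refine frequently_atTop.2 fun N => ?_
      obtain ⟨n, hn, h⟩ := h0io N
      exact ⟨n, hn, by simp [hf, h]⟩
    · exact le_liminf_of_le hbdd_le.isCoboundedUnder_ge (Eventually.of_forall hf0)
  · refine le_antisymm ?_ ?_
    · calc limsup f atTop ≤ limsup g atTop :=
          limsup_le_limsup (Eventually.of_forall hfg) hbdd_ge.isCoboundedUnder_le
            hS.isBoundedUnder_le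
        _ = p := hS.limsup_eq
    · refine le_of_forall_pos_le_add fun ε hε => sub_le_iff_le_add.1 ?_
      refine le_limsup_of_frequently_le ?_ hbdd_le
      have hev : ∀ᶠ n in atTop, p - ε < g n := hS.eventually (lt_mem_nhds (by linarith))
      have hfr : ∃ᶠ n in atTop, f n = g n := by
        refine frequently_atTop.2 fun N => ?_
        obtain ⟨n, hn, h⟩ := hpio N
        refine ⟨n, hn, ?_⟩
        show (n:ℝ)⁻¹ * r n = g n
        rw [h]; exact inv_mul_eq_div _ _
      exact (hfr.and_eventually hev).mono fun n ⟨h1, h2⟩ => by rw [h1]; exact h2.le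
end Limits


lemma exists_Lst (a : ℕ → Matrix (Fin 3) (Fin 3) MP)
    (hv : ∀ k, a k = exBmat ∨ a k = exCmat)
    (hB : ∀ N, ∃ k ≥ N, a k = exBmat) (N : ℕ) :
    ∃ n ≥ N, Lst a n := by
  obtain ⟨k, hk, hkB⟩ := hB N
  exact ⟨k + 1, by omega, stepB a hkB (inv a hv k)⟩

lemma exists_Rst (a : ℕ → Matrix (Fin 3) (Fin 3) MP)
    (hv : ∀ k, a k = exBmat ∨ a k = exCmat)
    (hB : ∀ N, ∃ k ≥ N, a k = exBmat)
    (hC : ∀ N, ∃ k ≥ N, a k = exCmat) (N : ℕ) :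
    ∃ n ≥ N, Rst a n := by
  classical
  obtain ⟨k, hk, hkB⟩ := hB N
  have hne : ∃ m, k < m ∧ a m = exCmat := by
    obtain ⟨m, hm, h⟩ := hC (k + 1); exact ⟨m, by omega, h⟩
  obtain ⟨hm1, hm2⟩ := Nat.find_spec hne
  have hL : ∀ j, k + 1 ≤ j → j ≤ Nat.find hne → Lst a j := by
    intro j hj1 hj2
    induction j, hj1 using Nat.le_induction with
    | base => exact stepB a hkB (inv a hv k)
    | succ j hj ih =>
      have hjm : j < Nat.find hne := by omega
      have hjB : a j = exBmat := by
        rcases hv j with h | h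
        · exact h
        · exact absurd ⟨by omega, h⟩ (Nat.find_min hne hjm)
      exact stepB a hjB (Or.inl (ih (by omega)))
  exact ⟨Nat.find hne + 1, by omega, (stepC a hm2).1 (hL _ (by omega) le_rfl)⟩

variable (a : ℕ → Matrix (Fin 3) (Fin 3) MP)
  (hv : ∀ k, a k = exBmat ∨ a k = exCmat)
  (hB : ∀ N, ∃ k ≥ N, a k = exBmat)
  (hC : ∀ N, ∃ k ≥ N, a k = exCmat)

lemma unb1 (hv : ∀ k, a k = exBmat ∨ a k = exCmat) (n : ℕ) :
    WithBot.unbotD 0 (xvec a n 1) = 0 ∨ WithBot.unbotD 0 (xvec a n 1) = (nB a n : ℝ) := by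
  rcases inv a hv n with ⟨_, h, _⟩ | ⟨_, h, _⟩
  · exact Or.inl (by rw [h]; rfl)
  · exact Or.inr (by rw [h]; rfl)

lemma unb2 (hv : ∀ k, a k = exBmat ∨ a k = exCmat) (n : ℕ) :
    WithBot.unbotD 0 (xvec a n 2) = 0 ∨ WithBot.unbotD 0 (xvec a n 2) = (nB a n : ℝ) := by
  rcases inv a hv n with ⟨_, _, h⟩ | ⟨_, _, h⟩
  · exact Or.inr (by rw [h]; rfl)
  · exact Or.inl (by rw [h]; rfl)

lemma freq10 (hv : ∀ k, a k = exBmat ∨ a k = exCmat)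
    (hB : ∀ N, ∃ k ≥ N, a k = exBmat) (N : ℕ) :
    ∃ n ≥ N, WithBot.unbotD 0 (xvec a n 1) = 0 := by
  obtain ⟨n, hn, h⟩ := exists_Lst a hv hB N
  exact ⟨n, hn, by rw [h.2.1]; rfl⟩

lemma freq2p (hv : ∀ k, a k = exBmat ∨ a k = exCmat)
    (hB : ∀ N, ∃ k ≥ N, a k = exBmat) (N : ℕ) :
    ∃ n ≥ N, WithBot.unbotD 0 (xvec a n 2) = (nB a n : ℝ) := by
  obtain ⟨n, hn, h⟩ := exists_Lst a hv hB N
  exact ⟨n, hn, by rw [h.2.2]; rfl⟩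

lemma freq1p (hv : ∀ k, a k = exBmat ∨ a k = exCmat)
    (hB : ∀ N, ∃ k ≥ N, a k = exBmat)
    (hC : ∀ N, ∃ k ≥ N, a k = exCmat) (N : ℕ) :
    ∃ n ≥ N, WithBot.unbotD 0 (xvec a n 1) = (nB a n : ℝ) := by
  obtain ⟨n, hn, h⟩ := exists_Rst a hv hB hC N
  exact ⟨n, hn, by rw [h.2.1]; rfl⟩

lemma freq20 (hv : ∀ k, a k = exBmat ∨ a k = exCmat)
    (hB : ∀ N, ∃ k ≥ N, a k = exBmat)
    (hC : ∀ N, ∃ k ≥ N, a k = exCmat) (N : ℕ) :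
    ∃ n ≥ N, WithBot.unbotD 0 (xvec a n 2) = 0 := by
  obtain ⟨n, hn, h⟩ := exists_Rst a hv hB hC N
  exact ⟨n, hn, by rw [h.2.2]; rfl⟩

lemma detLimits (a : ℕ → Matrix (Fin 3) (Fin 3) MP) (p : ℝ) (hp0 : 0 < p) (hp1 : p < 1)
    (hv : ∀ k, a k = exBmat ∨ a k = exCmat)
    (hS : Tendsto (fun n : ℕ => (nB a n : ℝ) / n) atTop (𝓝 p)) :
    (Tendsto (fun n : ℕ => (n : ℝ)⁻¹ * (WithBot.unbotD 0 (xvec a n 0))) atTop (𝓝 0)) ∧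
      (∀ i : Fin 3, i ≠ 0 →
        Filter.liminf (fun n : ℕ => (n : ℝ)⁻¹ * (WithBot.unbotD 0 (xvec a n i))) atTop = 0 ∧
        Filter.limsup (fun n : ℕ => (n : ℝ)⁻¹ * (WithBot.unbotD 0 (xvec a n i))) atTop = p) ∧
      ¬ ∃ L : Fin 3 → ℝ, ∀ i, Tendsto (fun n : ℕ => (n : ℝ)⁻¹ *
          (WithBot.unbotD 0 (xvec a n i))) atTop (𝓝 (L i)) := by
  -- B infinitely often
  have hB : ∀ N, ∃ k ≥ N, a k = exBmat := by
    by_contra h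
    push_neg at h
    obtain ⟨N, hN⟩ := h
    have hconst : ∀ n, N ≤ n → nB a n = nB a N := by
      intro n hn
      induction n, hn using Nat.le_induction with
      | base => rfl
      | succ n hn ih =>
        have : a n = exCmat := (hv n).resolve_left (hN n hn)
        rw [nB_succ_C a this, ih]
    have h0 : Tendsto (fun n : ℕ => (nB a n : ℝ) / n) atTop (𝓝 0) := by
      refine Tendsto.congr' ?_ (tendsto_const_div_atTop_nhds_zero_nat (nB a N : ℝ))
      filter_upwards [eventually_ge_atTop N] with n hn
      rw [hconst n hn]
    exact absurd (tendsto_nhds_unique hS h0) (by linarith)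
  -- C infinitely often
  have hC : ∀ N, ∃ k ≥ N, a k = exCmat := by
    by_contra h
    push_neg at h
    obtain ⟨N, hN⟩ := h
    have hlin : ∀ n, N ≤ n → nB a n = nB a N + (n - N) := by
      intro n hn
      induction n, hn using Nat.le_induction with
      | base => simp
      | succ n hn ih =>
        have : a n = exBmat := (hv n).resolve_right (hN n hn)
        rw [nB_succ_B a this, ih]; omega
    have h1 : Tendsto (fun n : ℕ => (nB a n : ℝ) / n) atTop (𝓝 1) := by
      have ht : Tendsto (fun n : ℕ => ((nB a N : ℝ) - N) / n + 1) atTop (𝓝 1) := by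
        have := (tendsto_const_div_atTop_nhds_zero_nat ((nB a N : ℝ) - N)).add
          (tendsto_const_nhds (x := (1:ℝ)))
        simpa using this
      refine Tendsto.congr' ?_ ht
      filter_upwards [eventually_ge_atTop (max N 1)] with n hn
      have hnN : N ≤ n := le_trans (le_max_left _ _) hn
      have hn1 : (1:ℕ) ≤ n := le_trans (le_max_right _ _) hn
      have hn0 : (n : ℝ) ≠ 0 := by positivity
      rw [hlin n hnN]
      push_cast [Nat.cast_sub hnN]
      field_simp
      ring
    exact absurd (tendsto_nhds_unique hS h1) (by linarith)
  have lim1 := coordLimits a p hp0 (fun n => WithBot.unbotD 0 (xvec a n 1)) hS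
    (unb1 a hv) (freq10 a hv hB) (freq1p a hv hB hC)
  have lim2 := coordLimits a p hp0 (fun n => WithBot.unbotD 0 (xvec a n 2)) hS
    (unb2 a hv) (freq20 a hv hB hC) (freq2p a hv hB)
  refine ⟨?_, ?_, ?_⟩
  · have hz : ∀ n, xvec a n 0 = 0 := fun n => by
      rcases inv a hv n with ⟨h, _⟩ | ⟨h, _⟩ <;> exact h
    have : (fun n : ℕ => (n : ℝ)⁻¹ * (WithBot.unbotD 0 (xvec a n 0))) = fun _ => 0 := by
      funext n; rw [hz n]; simp
    rw [this]; exact tendsto_const_nhds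
  · intro i hi
    have hi' : i = 1 ∨ i = 2 := by omega
    rcases hi' with rfl | rfl
    · exact lim1
    · exact lim2
  · rintro ⟨L, hL⟩
    have h1 := hL 1
    rw [h1.limsup_eq] at lim1
    have h2 := h1.liminf_eq
    rw [lim1.1] at h2
    rw [← h2] at lim1
    linarith [lim1.2]

section Prob
open ProbabilityTheory

lemma toE_injective : Function.Injective toE := by
  intro x y h
  induction x using WithBot.recBotCoe with
  | bot =>
    induction y using WithBot.recBotCoe with
    | bot => rfl
    | coe r => simp [toE] at h
  | coe r =>
    induction y using WithBot.recBotCoe with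
    | bot => simp [toE] at h
    | coe s =>
      simp only [toE, WithBot.recBotCoe_coe, EReal.coe_eq_coe_iff] at h
      rw [h]

lemma measurableSet_singleton_MP (c : MP) : MeasurableSet {c} := by
  have h : {c} = toE ⁻¹' {toE c} := by
    ext x
    simp [toE_injective.eq_iff]
  rw [h]
  exact MeasurableSpace.measurableSet_comap.2 ⟨{toE c}, measurableSet_singleton _, rfl⟩

lemma measurableSet_eq_matrix (M0 : Matrix (Fin 3) (Fin 3) MP) :
    MeasurableSet {M : Matrix (Fin 3) (Fin 3) MP | M = M0} := by
  have h : {M : Matrix (Fin 3) (Fin 3) MP | M = M0} =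
      ⋂ i, ⋂ j, (fun M : Matrix (Fin 3) (Fin 3) MP => M i j) ⁻¹' {M0 i j} := by
    ext M
    simp only [Set.mem_setOf_eq, Set.mem_iInter, Set.mem_preimage, Set.mem_singleton_iff]
    constructor
    · rintro rfl i j; rfl
    · intro h; ext i j; exact h i j
  rw [h]
  exact MeasurableSet.iInter fun i => MeasurableSet.iInter fun j =>
    ((measurable_pi_apply j).comp (measurable_pi_apply i)) (measurableSet_singleton_MP _)
end Prob

open ProbabilityTheory in
theorem stmt17' {Ω : Type*} [MeasurableSpace Ω] (μ : Measure Ω) [IsProbabilityMeasure μ]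
    (p : ℝ) (hp0 : 0 < p) (hp1 : p < 1)
    (A : ℕ → Ω → Matrix (Fin 3) (Fin 3) MP)
    (hmeas : ∀ n, Measurable (A n))
    (hindep : ProbabilityTheory.iIndepFun A μ)
    (hval : ∀ n, ∀ᵐ ω ∂μ, A n ω = exBmat ∨ A n ω = exCmat)
    (hpB : ∀ n, μ {ω | A n ω = exBmat} = ENNReal.ofReal p) :
    ∀ᵐ ω ∂μ,
      (Tendsto (fun n : ℕ => (n : ℝ)⁻¹ *
        (WithBot.unbotD 0 (xvec (fun k => A k ω) n 0))) atTop (𝓝 0)) ∧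
      (∀ i : Fin 3, i ≠ 0 →
        Filter.liminf (fun n : ℕ => (n : ℝ)⁻¹ *
          (WithBot.unbotD 0 (xvec (fun k => A k ω) n i))) atTop = 0 ∧
        Filter.limsup (fun n : ℕ => (n : ℝ)⁻¹ *
          (WithBot.unbotD 0 (xvec (fun k => A k ω) n i))) atTop = p) ∧
      ¬ ∃ L : Fin 3 → ℝ, ∀ i, Tendsto (fun n : ℕ => (n : ℝ)⁻¹ *
          (WithBot.unbotD 0 (xvec (fun k => A k ω) n i))) atTop (𝓝 (L i)) := by
  classical
  have msB := measurableSet_eq_matrix exBmat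
  set X : ℕ → Ω → ℝ := fun n ω => if A n ω = exBmat then 1 else 0 with hX
  have hEmeas : ∀ n, MeasurableSet {ω | A n ω = exBmat} := fun n => (hmeas n) msB
  have mX : ∀ n, Measurable (X n) := fun n =>
    Measurable.ite (hEmeas n) measurable_const measurable_const
  have hXindep : iIndepFun
      (fun n => (fun M => if M = exBmat then (1:ℝ) else 0) ∘ A n) μ :=
    hindep.comp _ (fun _ => Measurable.ite msB measurable_const measurable_const)
  have hpair : Pairwise (Function.onFun (IndepFun · · μ) X) := fun i j hij => hXindep.indepFun hij
  have hval01 : ∀ n ω, X n ω = 1 ∨ X n ω = 0 := by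
    intro n ω
    by_cases h : A n ω = exBmat <;> simp [hX, h]
  have hple1 : ENNReal.ofReal p ≤ 1 := ENNReal.ofReal_le_one.2 hp1.le
  have hmap : ∀ n, Measure.map (X n) μ =
      ENNReal.ofReal p • Measure.dirac (1:ℝ) + (1 - ENNReal.ofReal p) • Measure.dirac (0:ℝ) := by
    intro n
    ext s hs
    rw [Measure.map_apply (mX n) hs, Measure.add_apply, Measure.smul_apply,
      Measure.smul_apply, Measure.dirac_apply' _ hs, Measure.dirac_apply' _ hs,
      smul_eq_mul, smul_eq_mul]
    by_cases h1 : (1:ℝ) ∈ s <;> by_cases h0 : (0:ℝ) ∈ s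
    · have hpre : X n ⁻¹' s = Set.univ := by
        ext ω
        rcases hval01 n ω with h | h <;> simp [h, h1, h0]
      rw [hpre, measure_univ, Set.indicator_of_mem h1, Set.indicator_of_mem h0]
      simp only [Pi.one_apply, mul_one]
      exact (add_tsub_cancel_of_le hple1).symm
    · have hpre : X n ⁻¹' s = {ω | A n ω = exBmat} := by
        ext ω
        by_cases h : A n ω = exBmat <;> simp [hX, h, h1, h0]
      rw [hpre, hpB n, Set.indicator_of_mem h1, Set.indicator_of_notMem h0]
      simp
    · have hpre : X n ⁻¹' s = {ω | A n ω = exBmat}ᶜ := by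
        ext ω
        by_cases h : A n ω = exBmat <;> simp [hX, h, h1, h0]
      rw [hpre, measure_compl (hEmeas n) (measure_ne_top μ _), hpB n, measure_univ,
        Set.indicator_of_notMem h1, Set.indicator_of_mem h0]
      simp
    · have hpre : X n ⁻¹' s = ∅ := by
        ext ω
        rcases hval01 n ω with h | h <;> simp [h, h1, h0]
      rw [hpre, Set.indicator_of_notMem h1, Set.indicator_of_notMem h0]
      simp
  have hident : ∀ n, IdentDistrib (X n) (X 0) μ μ := fun n =>
    ⟨(mX n).aemeasurable, (mX 0).aemeasurable, (hmap n).trans (hmap 0).symm⟩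
  have hind0 : X 0 = Set.indicator {ω | A 0 ω = exBmat} (fun _ => (1:ℝ)) := by
    funext ω
    rw [Set.indicator_apply]
    rfl
  have hint : Integrable (X 0) μ := by
    rw [hind0]
    exact (integrable_const (1:ℝ)).indicator (hEmeas 0)
  have hexp : μ[X 0] = p := by
    rw [hind0, integral_indicator_const _ (hEmeas 0), Measure.real, hpB 0, smul_eq_mul, mul_one,
      ENNReal.toReal_ofReal hp0.le]
  have hSLLN := strong_law_ae_real X hint hpair hident
  rw [hexp] at hSLLN
  have hvals : ∀ᵐ ω ∂μ, ∀ k, A k ω = exBmat ∨ A k ω = exCmat := ae_all_iff.2 hval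
  filter_upwards [hSLLN, hvals] with ω hω hωv
  refine detLimits _ p hp0 hp1 hωv ?_
  have hsum : ∀ n, (nB (fun k => A k ω) n : ℝ) = ∑ i ∈ Finset.range n, X i ω := by
    intro n
    unfold nB
    rw [Finset.card_filter]
    push_cast
    refine Finset.sum_congr rfl fun i _ => ?_
    by_cases h : A i ω = exBmat <;> simp [hX, h]
  refine hω.congr fun n => ?_
  rw [hsum n]

/-- for i.i.d. matrices equal to `B` with probability `p ∈ (0,1)` and `C`
with probability `1-p`, almost surely `(1/n)x_1(n,0) → 0` while for `i ∈ {2,3}`,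
`liminf (1/n)x_i(n,0) = 0` and `limsup (1/n)x_i(n,0) = p`; in particular `(1/n)x(n,0)`
does not converge almost surely. -/
theorem stmt17 {Ω : Type*} [MeasurableSpace Ω] (μ : Measure Ω) [IsProbabilityMeasure μ]
    (p : ℝ) (hp0 : 0 < p) (hp1 : p < 1)
    (A : ℕ → Ω → Matrix (Fin 3) (Fin 3) MP)
    (hmeas : ∀ n, Measurable (A n))
    (hindep : ProbabilityTheory.iIndepFun A μ)
    (hval : ∀ n, ∀ᵐ ω ∂μ, A n ω = exBmat ∨ A n ω = exCmat)
    (hpB : ∀ n, μ {ω | A n ω = exBmat} = ENNReal.ofReal p) :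
    ∀ᵐ ω ∂μ,
      (Tendsto (fun n : ℕ => (n : ℝ)⁻¹ *
        (WithBot.unbotD 0 (xvec (fun k => A k ω) n 0))) atTop (𝓝 0)) ∧
      (∀ i : Fin 3, i ≠ 0 →
        Filter.liminf (fun n : ℕ => (n : ℝ)⁻¹ *
          (WithBot.unbotD 0 (xvec (fun k => A k ω) n i))) atTop = 0 ∧
        Filter.limsup (fun n : ℕ => (n : ℝ)⁻¹ *
          (WithBot.unbotD 0 (xvec (fun k => A k ω) n i))) atTop = p) ∧
      ¬ ∃ L : Fin 3 → ℝ, ∀ i, Tendsto (fun n : ℕ => (n : ℝ)⁻¹ *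
          (WithBot.unbotD 0 (xvec (fun k => A k ω) n i))) atTop (𝓝 (L i)) :=
  stmt17' μ p hp0 hp1 A hmeas hindep hval hpB
end
end
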